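/- Let n ≥ 1 and let q ∈ ℂ be nonzero and not a root of unity. Let φ be a ℂ-algebra automorphism of 𝔥_n(q) that maps V into V (a graded automorphism). Then there exist a permutation π of Fin n and nonzero scalars A_1, …, A_n, B_1, …, B_n ∈ ℂ such that for every i: φ(x_i) = A_i · x_{π(i)}, φ(y_i) = B_i · y_{π(i)}, and φ(z_i) = A_i B_i · z_{π(i)}. -/

import Mathlib

noncomputable section

open scoped BigOperators

namespace QHeisenberg

/-- Index type for the `3n` generators: `x`-, `y`-, and `z`-variables. -/
abbrev GenIdx (n : ℕ) := Fin n ⊕ (Fin n ⊕ Fin n)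

/-- The `x_i` generator in the free algebra. -/
def fX (n : ℕ) (i : Fin n) : FreeAlgebra ℂ (GenIdx n) := FreeAlgebra.ι ℂ (Sum.inl i)

/-- The `y_i` generator in the free algebra. -/
def fY (n : ℕ) (i : Fin n) : FreeAlgebra ℂ (GenIdx n) := FreeAlgebra.ι ℂ (Sum.inr (Sum.inl i))

/-- The `z_i` generator in the free algebra. -/
def fZ (n : ℕ) (i : Fin n) : FreeAlgebra ℂ (GenIdx n) := FreeAlgebra.ι ℂ (Sum.inr (Sum.inr i))

/-- The defining relations of the q-Heisenberg algebra `𝔥_n(q)`. -/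
inductive Rel (n : ℕ) (q : ℂ) :
    FreeAlgebra ℂ (GenIdx n) → FreeAlgebra ℂ (GenIdx n) → Prop
  | xx (i j : Fin n) : Rel n q (fX n i * fX n j) (fX n j * fX n i)
  | yy (i j : Fin n) : Rel n q (fY n i * fY n j) (fY n j * fY n i)
  | zz (i j : Fin n) : Rel n q (fZ n i * fZ n j) (fZ n j * fZ n i)
  | xz (i : Fin n) : Rel n q (fX n i * fZ n i) (q • (fZ n i * fX n i))
  | yz (i : Fin n) : Rel n q (fY n i * fZ n i) (q⁻¹ • (fZ n i * fY n i))
  | xy (i : Fin n) : Rel n q (fX n i * fY n i) (q⁻¹ • (fY n i * fX n i) + fZ n i)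
  | xyne (i j : Fin n) : i ≠ j → Rel n q (fX n i * fY n j) (fY n j * fX n i)
  | xzne (i j : Fin n) : i ≠ j → Rel n q (fX n i * fZ n j) (fZ n j * fX n i)
  | yzne (i j : Fin n) : i ≠ j → Rel n q (fY n i * fZ n j) (fZ n j * fY n i)

/-- The q-Heisenberg algebra `𝔥_n(q)`. -/
abbrev H (n : ℕ) (q : ℂ) := RingQuot (Rel n q)

/-- The generator `x_i` of `𝔥_n(q)`. -/
def X (n : ℕ) (q : ℂ) (i : Fin n) : H n q := RingQuot.mkAlgHom ℂ (Rel n q) (fX n i)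

/-- The generator `y_i` of `𝔥_n(q)`. -/
def Y (n : ℕ) (q : ℂ) (i : Fin n) : H n q := RingQuot.mkAlgHom ℂ (Rel n q) (fY n i)

/-- The generator `z_i` of `𝔥_n(q)`. -/
def Z (n : ℕ) (q : ℂ) (i : Fin n) : H n q := RingQuot.mkAlgHom ℂ (Rel n q) (fZ n i)

/-- `q` is not a root of unity: `q ^ k ≠ 1` for every `k ≥ 1`. -/
def NotRootOfUnity (q : ℂ) : Prop := ∀ k : ℕ, 1 ≤ k → q ^ k ≠ 1

end QHeisenberg

namespace QHeisenberg

/-- The `ℂ`-linear span `V` of the `3n` generators `x_i, y_i, z_i` of `𝔥_n(q)`. -/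
def genSpan (n : ℕ) (q : ℂ) : Submodule ℂ (H n q) :=
  Submodule.span ℂ (Set.range (X n q) ∪ Set.range (Y n q) ∪ Set.range (Z n q))


/-! ### Auxiliary development -/

open MvPolynomial Finsupp

variable {n : ℕ}

/-- The coefficients `c_k` with `c_0 = 0`, `c_{k+1} = q⁻¹ c_k + q^k`. -/
def cq (q : ℂ) : ℕ → ℂ
  | 0 => 0
  | (k+1) => q⁻¹ * cq q k + q ^ k

@[simp] lemma cq_zero (q : ℂ) : cq q 0 = 0 := rfl
lemma cq_succ (q : ℂ) (k : ℕ) : cq q (k+1) = q⁻¹ * cq q k + q ^ k := rfl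
@[simp] lemma cq_one (q : ℂ) : cq q 1 = 1 := by simp [cq_succ]

/-- Polynomial ring on which `𝔥_n(q)` acts. -/
abbrev P (n : ℕ) := MvPolynomial (Fin n) ℂ

/-- Monomial basis. -/
def bm (n : ℕ) : Module.Basis (Fin n →₀ ℕ) ℂ (P n) := MvPolynomial.basisMonomials _ _

@[simp] lemma bm_apply (d : Fin n →₀ ℕ) : bm n d = monomial d (1:ℂ) := by
  rw [bm, coe_basisMonomials]

/-- shorthand for `single j 1`. -/
abbrev sg (j : Fin n) : Fin n →₀ ℕ := Finsupp.single j 1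

/-- Action of `x_j` (with weight `w j`). -/
def Xop (q : ℂ) (w : Fin n → ℂ) (j : Fin n) : Module.End ℂ (P n) :=
  (bm n).constr ℂ fun d => (w j * cq q (d j)) • monomial (d - sg j) (1:ℂ)

/-- Action of `y_j`. -/
def Yop (n : ℕ) (j : Fin n) : Module.End ℂ (P n) :=
  (bm n).constr ℂ fun d => monomial (d + sg j) (1:ℂ)

/-- Action of `z_j` (with weight `w j`). -/
def Zop (q : ℂ) (w : Fin n → ℂ) (j : Fin n) : Module.End ℂ (P n) :=
  (bm n).constr ℂ fun d => (w j * q ^ (d j)) • monomial d (1:ℂ)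

@[simp] lemma Xop_apply (q : ℂ) (w : Fin n → ℂ) (j : Fin n) (d : Fin n →₀ ℕ) :
    Xop q w j (monomial d 1) = (w j * cq q (d j)) • monomial (d - sg j) (1:ℂ) := by
  have h := Module.Basis.constr_basis (bm n) ℂ (fun d => (w j * cq q ((d j))) • monomial (d - sg j) (1:ℂ)) d
  simpa [Xop] using h

@[simp] lemma Yop_apply (j : Fin n) (d : Fin n →₀ ℕ) :
    Yop n j (monomial d 1) = monomial (d + sg j) (1:ℂ) := by
  have h := Module.Basis.constr_basis (bm n) ℂ (fun d => monomial (d + sg j) (1:ℂ)) d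
  simpa [Yop] using h

@[simp] lemma Zop_apply (q : ℂ) (w : Fin n → ℂ) (j : Fin n) (d : Fin n →₀ ℕ) :
    Zop q w j (monomial d 1) = (w j * q ^ (d j)) • monomial d (1:ℂ) := by
  have h := Module.Basis.constr_basis (bm n) ℂ (fun d => (w j * q ^ ((d j))) • monomial d (1:ℂ)) d
  simpa [Zop] using h


/-! ### Finsupp index arithmetic -/

lemma sg_apply_self (j : Fin n) : sg j j = 1 := by simp
lemma sub_apply_self (d : Fin n →₀ ℕ) (j : Fin n) : (d - sg j) j = d j - 1 := by
  simp [Finsupp.tsub_apply]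
lemma add_apply_self (d : Fin n →₀ ℕ) (j : Fin n) : (d + sg j) j = d j + 1 := by simp
lemma sub_apply_ne (d : Fin n →₀ ℕ) {i j : Fin n} (h : i ≠ j) : (d - sg j) i = d i := by
  simp [Finsupp.tsub_apply, Finsupp.single_apply, Ne.symm h]
lemma add_apply_ne (d : Fin n →₀ ℕ) {i j : Fin n} (h : i ≠ j) : (d + sg j) i = d i := by
  simp [Finsupp.add_apply, Finsupp.single_apply, Ne.symm h]
lemma sub_sub_comm (d : Fin n →₀ ℕ) (i j : Fin n) : d - sg i - sg j = d - sg j - sg i := by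
  ext k; simp [Finsupp.tsub_apply]; omega
lemma add_sub_swap (d : Fin n →₀ ℕ) {i j : Fin n} (h : i ≠ j) :
    d + sg j - sg i = d - sg i + sg j := by
  ext k
  simp only [Finsupp.tsub_apply, Finsupp.add_apply, Finsupp.single_apply]
  split_ifs with h1 h2 h2 <;> omega
lemma sub_add_cancel_pos {d : Fin n →₀ ℕ} {i : Fin n} (h : d i ≠ 0) :
    d - sg i + sg i = d := by
  ext k
  simp only [Finsupp.tsub_apply, Finsupp.add_apply, Finsupp.single_apply]
  split_ifs with h1
  · subst h1; omega
  · omega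

/-! ### Operator relations -/

variable {q : ℂ} {w : Fin n → ℂ}

lemma rel_xx (i j : Fin n) : Xop q w i * Xop q w j = Xop q w j * Xop q w i := by
  apply Module.Basis.ext (bm n); intro d
  by_cases hij : i = j
  · subst hij; rfl
  · simp only [bm_apply, Module.End.mul_apply, Xop_apply, map_smul, smul_smul,
      sub_apply_ne d hij, sub_apply_ne d (Ne.symm hij), sub_sub_comm d j i]
    ring_nf

lemma rel_yy (i j : Fin n) : Yop n i * Yop n j = Yop n j * Yop n i := by
  apply Module.Basis.ext (bm n); intro d
  simp only [bm_apply, Module.End.mul_apply, Yop_apply, add_right_comm]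

lemma rel_zz (i j : Fin n) : Zop q w i * Zop q w j = Zop q w j * Zop q w i := by
  apply Module.Basis.ext (bm n); intro d
  simp only [bm_apply, Module.End.mul_apply, Zop_apply, map_smul, smul_smul]
  ring_nf

lemma rel_xz (i : Fin n) : Xop q w i * Zop q w i = q • (Zop q w i * Xop q w i) := by
  apply Module.Basis.ext (bm n); intro d
  simp only [bm_apply, Module.End.mul_apply, Xop_apply, Zop_apply, map_smul, smul_smul,
    LinearMap.smul_apply, sub_apply_self]
  rcases hd : d i with _ | k
  · simp [hd]
  · simp only [hd, Nat.add_sub_cancel]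
    congr 1
    ring

lemma rel_yz (hq : q ≠ 0) (i : Fin n) : Yop n i * Zop q w i = q⁻¹ • (Zop q w i * Yop n i) := by
  apply Module.Basis.ext (bm n); intro d
  simp only [bm_apply, Module.End.mul_apply, Yop_apply, Zop_apply, map_smul, smul_smul,
    LinearMap.smul_apply, add_apply_self, pow_succ]
  congr 1
  field_simp

lemma rel_xy (i : Fin n) :
    Xop q w i * Yop n i = q⁻¹ • (Yop n i * Xop q w i) + Zop q w i := by
  apply Module.Basis.ext (bm n); intro d
  simp only [bm_apply, Module.End.mul_apply, LinearMap.add_apply, LinearMap.smul_apply,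
    Xop_apply, Yop_apply, Zop_apply, map_smul, add_apply_self, add_tsub_cancel_right]
  rcases hd : d i with _ | k
  · simp [hd, cq_succ]
  · rw [sub_add_cancel_pos (by rw [hd]; exact Nat.succ_ne_zero _), smul_smul]
    simp only [hd, cq_succ, ← add_smul]
    congr 1
    ring

lemma rel_xyne {i j : Fin n} (h : i ≠ j) : Xop q w i * Yop n j = Yop n j * Xop q w i := by
  apply Module.Basis.ext (bm n); intro d
  simp only [bm_apply, Module.End.mul_apply, Xop_apply, Yop_apply, map_smul,
    add_apply_ne d h, add_sub_swap d h]

lemma rel_xzne {i j : Fin n} (h : i ≠ j) : Xop q w i * Zop q w j = Zop q w j * Xop q w i := by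
  apply Module.Basis.ext (bm n); intro d
  simp only [bm_apply, Module.End.mul_apply, Xop_apply, Zop_apply, map_smul, smul_smul,
    sub_apply_ne d (Ne.symm h)]
  ring_nf

lemma rel_yzne {i j : Fin n} (h : i ≠ j) : Yop n i * Zop q w j = Zop q w j * Yop n i := by
  apply Module.Basis.ext (bm n); intro d
  simp only [bm_apply, Module.End.mul_apply, Yop_apply, Zop_apply, map_smul,
    add_apply_ne d (Ne.symm h)]

/-! ### The representation -/

/-- Lift to the free algebra. -/
def repAux (n : ℕ) (q : ℂ) (w : Fin n → ℂ) :
    FreeAlgebra ℂ (GenIdx n) →ₐ[ℂ] Module.End ℂ (P n) :=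
  FreeAlgebra.lift ℂ (Sum.elim (Xop q w) (Sum.elim (Yop n) (Zop q w)))

lemma repAux_rel (hq : q ≠ 0) :
    ∀ ⦃a b : FreeAlgebra ℂ (GenIdx n)⦄, Rel n q a b → repAux n q w a = repAux n q w b := by
  intro a b h
  induction h with
  | xx i j => simpa [repAux, fX, map_mul] using rel_xx i j
  | yy i j => simpa [repAux, fY, map_mul] using rel_yy i j
  | zz i j => simpa [repAux, fZ, map_mul] using rel_zz i j
  | xz i => simpa [repAux, fX, fZ, map_mul, map_smul] using rel_xz i
  | yz i => simpa [repAux, fY, fZ, map_mul, map_smul] using rel_yz hq i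
  | xy i => simpa [repAux, fX, fY, fZ, map_mul, map_smul, map_add] using rel_xy i
  | xyne i j h => simpa [repAux, fX, fY, map_mul] using rel_xyne h
  | xzne i j h => simpa [repAux, fX, fZ, map_mul] using rel_xzne h
  | yzne i j h => simpa [repAux, fY, fZ, map_mul] using rel_yzne h

/-- The representation of `𝔥_n(q)` on `P n`, with weights `w`. -/
def rep (n : ℕ) (q : ℂ) (hq : q ≠ 0) (w : Fin n → ℂ) :
    H n q →ₐ[ℂ] Module.End ℂ (P n) :=
  RingQuot.liftAlgHom ℂ ⟨repAux n q w, repAux_rel hq⟩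

@[simp] lemma rep_X (hq : q ≠ 0) (i : Fin n) : rep n q hq w (X n q i) = Xop q w i := by
  rw [X, rep, RingQuot.liftAlgHom_mkAlgHom_apply]
  simp [repAux, fX]

@[simp] lemma rep_Y (hq : q ≠ 0) (i : Fin n) : rep n q hq w (Y n q i) = Yop n i := by
  rw [Y, rep, RingQuot.liftAlgHom_mkAlgHom_apply]
  simp [repAux, fY]

@[simp] lemma rep_Z (hq : q ≠ 0) (i : Fin n) : rep n q hq w (Z n q i) = Zop q w i := by
  rw [Z, rep, RingQuot.liftAlgHom_mkAlgHom_apply]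
  simp [repAux, fZ]


/-! ### Linear combinations of generators -/

/-- A generic element of `V` with coordinates `r, s, t`. -/
def SH (n : ℕ) (q : ℂ) (r s t : Fin n → ℂ) : H n q :=
  ∑ j, (r j • X n q j + s j • Y n q j + t j • Z n q j)

/-- The corresponding operator. -/
def opS (q : ℂ) (w : Fin n → ℂ) (r s t : Fin n → ℂ) : Module.End ℂ (P n) :=
  ∑ j, (r j • Xop q w j + s j • Yop n j + t j • Zop q w j)

lemma rep_SH (hq : q ≠ 0) (w r s t : Fin n → ℂ) :
    rep n q hq w (SH n q r s t) = opS q w r s t := by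
  simp [SH, opS, map_sum, map_add, map_smul]

lemma opS_monomial (r s t : Fin n → ℂ) (d : Fin n →₀ ℕ) :
    opS q w r s t (monomial d 1) =
      (∑ j, (r j * (w j * cq q (d j))) • monomial (d - sg j) (1:ℂ))
      + (∑ j, s j • monomial (d + sg j) (1:ℂ))
      + (∑ j, (t j * (w j * q ^ d j)) • monomial d (1:ℂ)) := by
  simp [opS, LinearMap.sum_apply, LinearMap.add_apply, LinearMap.smul_apply, smul_smul,
    Finset.sum_add_distrib]

/-! ### Nonequality facts about exponents -/

@[simp] lemma sg_eq_iff {j m : Fin n} : sg j = sg m ↔ j = m :=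
  Finsupp.single_left_inj one_ne_zero

lemma sg_ne_zero (j : Fin n) : sg j ≠ (0 : Fin n →₀ ℕ) := by
  simp

lemma sg_add_sg_ne_zero (a b : Fin n) : sg a + sg b ≠ 0 := by
  intro h
  have ha := DFunLike.congr_fun h a
  simp only [Finsupp.add_apply, Finsupp.single_apply, Finsupp.coe_zero, Pi.zero_apply] at ha
  split_ifs at ha <;> omega

lemma sg_add_sg_ne_sg (a b p : Fin n) : sg a + sg b ≠ sg p := by
  intro h
  have ha := DFunLike.congr_fun h a
  have hb := DFunLike.congr_fun h b
  simp only [Finsupp.add_apply, Finsupp.single_apply] at ha hb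
  split_ifs at ha hb <;> first | omega | grind

lemma deg2_sub_ne_zero (a b p : Fin n) : sg a + sg b - sg p ≠ 0 := by
  intro h
  rw [tsub_eq_zero_iff_le] at h
  have ha : (sg a + sg b) a ≤ sg p a := h a
  have hb : (sg a + sg b) b ≤ sg p b := h b
  simp only [Finsupp.add_apply, Finsupp.single_apply] at ha hb
  split_ifs at ha hb <;> first | omega | grind

/-! ### Coefficient extraction -/

lemma c0z (r s t : Fin n → ℂ) :
    coeff 0 (opS q w r s t (monomial 0 1)) = ∑ j, t j * w j := by
  rw [opS_monomial]
  simp [MvPolynomial.coeff_sum, coeff_monomial, sg_ne_zero, Ne.symm (sg_ne_zero _)]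

lemma c0s (r s t : Fin n → ℂ) (p : Fin n) :
    coeff 0 (opS q w r s t (monomial (sg p) 1)) = w p * r p := by
  rw [opS_monomial]
  simp only [MvPolynomial.coeff_add, MvPolynomial.coeff_sum, coeff_smul, coeff_monomial,
    smul_eq_mul]
  rw [Finset.sum_eq_single p]
  · simp [Ne.symm (sg_ne_zero _), Ne.symm (sg_add_sg_ne_zero p _)]
    ring
  · intro j _ hj
    simp [Finsupp.single_apply, Ne.symm hj]
  · simp
lemma csz (r s t : Fin n → ℂ) (m : Fin n) :
    coeff (sg m) (opS q w r s t (monomial 0 1)) = s m := by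
  rw [opS_monomial]
  simp [MvPolynomial.coeff_sum, coeff_monomial, MvPolynomial.coeff_one,
    Ne.symm (sg_ne_zero m), Finset.sum_ite_eq', sg_ne_zero]

lemma css (r s t : Fin n → ℂ) (m p : Fin n) :
    coeff (sg m) (opS q w r s t (monomial (sg p) 1)) =
      if p = m then ∑ j, t j * w j * q ^ (sg p) j else 0 := by
  rw [opS_monomial]
  simp only [MvPolynomial.coeff_add, MvPolynomial.coeff_sum, coeff_smul, coeff_monomial,
    smul_eq_mul, sg_eq_iff]
  rw [Finset.sum_eq_zero, Finset.sum_eq_zero]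
  · simp only [zero_add, add_zero]
    split_ifs with h
    · subst h
      exact Finset.sum_congr rfl fun j _ => by ring
    · simp
  · intro j _
    simp [sg_add_sg_ne_sg]
  · intro j _
    by_cases hjp : j = p
    · subst hjp
      simp [tsub_self, MvPolynomial.coeff_one, Ne.symm (sg_ne_zero m)]
    · simp [Finsupp.single_apply, Ne.symm hjp]

lemma c0d (r s t : Fin n → ℂ) (a b : Fin n) :
    coeff 0 (opS q w r s t (monomial (sg a + sg b) 1)) = 0 := by
  rw [opS_monomial]
  simp [MvPolynomial.coeff_sum, coeff_monomial, deg2_sub_ne_zero, sg_add_sg_ne_zero,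
    fun j => Ne.symm (sg_add_sg_ne_zero a b)]


/-! ### Composition coefficients -/

lemma comp_c0z (r s t r' s' t' : Fin n → ℂ) :
    coeff 0 ((opS q w r s t * opS q w r' s' t') (monomial 0 1)) =
      (∑ j, t' j * w j) * (∑ j, t j * w j) + ∑ j, s' j * (w j * r j) := by
  rw [Module.End.mul_apply, opS_monomial]
  simp only [map_add, map_sum, map_smul, MvPolynomial.coeff_add, MvPolynomial.coeff_sum,
    coeff_smul, smul_eq_mul, Finsupp.coe_zero, Pi.zero_apply, cq_zero, mul_zero, zero_mul,
    zero_add, pow_zero, mul_one, c0z, c0s]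
  rw [Finset.sum_congr rfl (fun j _ => rfl), Finset.sum_const_zero]
  ring_nf
  rw [Finset.sum_mul]
  simp only [← Finset.sum_mul]
  ring

lemma comp_csg (r s t r' s' t' : Fin n → ℂ) (m : Fin n) :
    coeff (sg m) ((opS q w r s t * opS q w r' s' t') (monomial 0 1)) =
      (∑ j, t' j * w j) * s m + s' m * (∑ j, t j * w j * q ^ (sg m) j) := by
  rw [Module.End.mul_apply, opS_monomial]
  simp only [map_add, map_sum, map_smul, MvPolynomial.coeff_add, MvPolynomial.coeff_sum,
    coeff_smul, smul_eq_mul, Finsupp.coe_zero, Pi.zero_apply, cq_zero, mul_zero, zero_mul,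
    zero_add, pow_zero, mul_one, csz, css]
  rw [Finset.sum_const_zero, zero_add, Finset.sum_congr rfl
    (fun j _ => by rw [mul_ite, mul_zero]), Finset.sum_ite_eq' Finset.univ m
    (fun j => s' j * ∑ p, t p * w p * q ^ (sg j) p)]
  simp [Finset.sum_mul]
  ring_nf
  congr 1
  · congr 1
    exact Finset.sum_congr rfl fun j _ => by ring
  · exact Finset.sum_congr rfl fun j _ => by ring

lemma comp_c0sg (r s t r' s' t' : Fin n → ℂ) (m : Fin n) :
    coeff 0 ((opS q w r s t * opS q w r' s' t') (monomial (sg m) 1)) =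
      (w m * r' m) * (∑ j, t j * w j) + (∑ j, t' j * w j * q ^ (sg m) j) * (w m * r m) := by
  rw [Module.End.mul_apply, opS_monomial]
  simp only [map_add, map_sum, map_smul, MvPolynomial.coeff_add, MvPolynomial.coeff_sum,
    coeff_smul, smul_eq_mul, c0d, mul_zero, Finset.sum_const_zero, add_zero, c0s]
  rw [Finset.sum_eq_single m]
  · rw [tsub_self, c0z]
    simp only [Finsupp.single_apply, eq_self_iff_true, if_true, cq_one, mul_one]
    simp only [Finset.mul_sum]
    congr 1
    · exact Finset.sum_congr rfl fun j _ => by ring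
    · rw [Finset.sum_mul]
      exact Finset.sum_congr rfl fun j _ => by ring
  · intro j _ hj
    simp [Finsupp.single_apply, Ne.symm hj]
  · simp

/-! ### The master extraction lemma -/

lemma extract (hq : q ≠ 0) {r s t r' s' t' r'' s'' t'' : Fin n → ℂ} {μ ν : ℂ}
    (hrel : SH n q r s t * SH n q r' s' t' =
      μ • (SH n q r' s' t' * SH n q r s t) + ν • SH n q r'' s'' t'') (w : Fin n → ℂ) :
    ((∑ j, t' j * w j) * (∑ j, t j * w j) + (∑ j, s' j * (w j * r j)) =
      μ * ((∑ j, t j * w j) * (∑ j, t' j * w j) + ∑ j, s j * (w j * r' j))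
        + ν * (∑ j, t'' j * w j))
    ∧ (∀ m, (∑ j, t' j * w j) * s m + s' m * (∑ j, t j * w j * q ^ (sg m) j) =
        μ * ((∑ j, t j * w j) * s' m + s m * (∑ j, t' j * w j * q ^ (sg m) j)) + ν * s'' m)
    ∧ (∀ m, (w m * r' m) * (∑ j, t j * w j) + (∑ j, t' j * w j * q ^ (sg m) j) * (w m * r m) =
        μ * ((w m * r m) * (∑ j, t' j * w j) + (∑ j, t j * w j * q ^ (sg m) j) * (w m * r' m))
          + ν * (w m * r'' m)) := by
  have hop : opS q w r s t * opS q w r' s' t' =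
      μ • (opS q w r' s' t' * opS q w r s t) + ν • opS q w r'' s'' t'' := by
    have h := congrArg (rep n q hq w) hrel
    simpa only [map_mul, map_add, map_smul, rep_SH] using h
  refine ⟨?_, ?_, ?_⟩
  · have h := congrArg (fun f : Module.End ℂ (P n) => coeff 0 (f (monomial 0 1))) hop
    simpa only [LinearMap.add_apply, LinearMap.smul_apply, MvPolynomial.coeff_add, coeff_smul,
      smul_eq_mul, comp_c0z, c0z] using h
  · intro m
    have h := congrArg (fun f : Module.End ℂ (P n) => coeff (sg m) (f (monomial 0 1))) hop
    simpa only [LinearMap.add_apply, LinearMap.smul_apply, MvPolynomial.coeff_add, coeff_smul,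
      smul_eq_mul, comp_csg, csz] using h
  · intro m
    have h := congrArg (fun f : Module.End ℂ (P n) => coeff 0 (f (monomial (sg m) 1))) hop
    simpa only [LinearMap.add_apply, LinearMap.smul_apply, MvPolynomial.coeff_add, coeff_smul,
      smul_eq_mul, comp_c0sg, c0s] using h


/-! ### Relations in `H`, span representation, nonvanishing -/

lemma H_xy (i : Fin n) :
    X n q i * Y n q i = q⁻¹ • (Y n q i * X n q i) + Z n q i := by
  have h := RingQuot.mkAlgHom_rel ℂ (Rel.xy (n := n) (q := q) i)
  simpa only [X, Y, Z, map_mul, map_add, map_smul] using h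

lemma H_xz (i : Fin n) : X n q i * Z n q i = q • (Z n q i * X n q i) := by
  have h := RingQuot.mkAlgHom_rel ℂ (Rel.xz (n := n) (q := q) i)
  simpa only [X, Z, map_mul, map_smul] using h

lemma H_yz (i : Fin n) : Y n q i * Z n q i = q⁻¹ • (Z n q i * Y n q i) := by
  have h := RingQuot.mkAlgHom_rel ℂ (Rel.yz (n := n) (q := q) i)
  simpa only [Y, Z, map_mul, map_smul] using h

lemma SH_add (r s t r' s' t' : Fin n → ℂ) :
    SH n q r s t + SH n q r' s' t' = SH n q (r + r') (s + s') (t + t') := by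
  rw [SH, SH, SH, ← Finset.sum_add_distrib]
  refine Finset.sum_congr rfl fun j _ => ?_
  simp only [Pi.add_apply, add_smul]
  abel

lemma SH_smul (μ : ℂ) (r s t : Fin n → ℂ) :
    μ • SH n q r s t = SH n q (μ • r) (μ • s) (μ • t) := by
  rw [SH, SH, Finset.smul_sum]
  refine Finset.sum_congr rfl fun j _ => ?_
  simp only [Pi.smul_apply, smul_add, smul_smul, smul_eq_mul]

lemma X_eq_SH (i : Fin n) :
    X n q i = SH n q (fun j => if j = i then 1 else 0) 0 0 := by
  simp [SH, ite_smul, Finset.sum_ite_eq']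

lemma Y_eq_SH (i : Fin n) :
    Y n q i = SH n q 0 (fun j => if j = i then 1 else 0) 0 := by
  simp [SH, ite_smul, Finset.sum_ite_eq']

lemma Z_eq_SH (i : Fin n) :
    Z n q i = SH n q 0 0 (fun j => if j = i then 1 else 0) := by
  simp [SH, ite_smul, Finset.sum_ite_eq']

lemma mem_genSpan {v : H n q} (hv : v ∈ genSpan n q) :
    ∃ r s t : Fin n → ℂ, v = SH n q r s t := by
  refine Submodule.span_induction (p := fun x _ => ∃ r s t : Fin n → ℂ, x = SH n q r s t)
    ?_ ?_ ?_ ?_ hv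
  · rintro x (⟨⟨i, rfl⟩ | ⟨i, rfl⟩⟩ | ⟨i, rfl⟩)
    · exact ⟨_, _, _, X_eq_SH i⟩
    · exact ⟨_, _, _, Y_eq_SH i⟩
    · exact ⟨_, _, _, Z_eq_SH i⟩
  · exact ⟨0, 0, 0, by simp [SH]⟩
  · rintro x y _ _ ⟨r, s, t, rfl⟩ ⟨r', s', t', rfl⟩
    exact ⟨_, _, _, SH_add r s t r' s' t'⟩
  · rintro μ x _ ⟨r, s, t, rfl⟩
    exact ⟨_, _, _, SH_smul μ r s t⟩

lemma X_mem_genSpan (i : Fin n) : X n q i ∈ genSpan n q :=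
  Submodule.subset_span (Or.inl (Or.inl ⟨i, rfl⟩))
lemma Y_mem_genSpan (i : Fin n) : Y n q i ∈ genSpan n q :=
  Submodule.subset_span (Or.inl (Or.inr ⟨i, rfl⟩))
lemma Z_mem_genSpan (i : Fin n) : Z n q i ∈ genSpan n q :=
  Submodule.subset_span (Or.inr ⟨i, rfl⟩)

lemma Z_ne_zero (hq : q ≠ 0) (i : Fin n) : Z n q i ≠ 0 := by
  intro h
  have h2 := congrArg (fun v => coeff (0 : Fin n →₀ ℕ)
    ((rep n q hq (fun _ => 1) v) (monomial 0 1))) h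
  simp only [rep_Z, map_zero, Zop_apply, Finsupp.coe_zero, Pi.zero_apply, pow_zero,
    one_mul, mul_one, one_smul, coeff_monomial, if_pos rfl, LinearMap.zero_apply,
    MvPolynomial.coeff_zero] at h2
  exact one_ne_zero h2

lemma X_smul_eq_iff (hq : q ≠ 0) {α β : ℂ} {i i' : Fin n} (hα : α ≠ 0)
    (h : α • X n q i = β • X n q i') : i = i' := by
  by_contra hne
  have h2 := congrArg (fun v => coeff (0 : Fin n →₀ ℕ)
    ((rep n q hq (fun _ => 1) v) (monomial (sg i) 1))) h
  simp only [map_smul, rep_X, LinearMap.smul_apply, Xop_apply, coeff_smul,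
    Finsupp.single_apply, if_pos rfl, cq_one, one_mul, mul_one, smul_eq_mul,
    if_neg (fun hc : i = i' => hne hc), cq_zero, zero_smul, MvPolynomial.coeff_zero,
    mul_zero, tsub_self, coeff_monomial] at h2
  simp only [if_true, cq_one, one_mul, mul_one] at h2
  exact hα h2


/-! ### Special weight vectors -/

/-- Weight vector supported on (at most) two points. -/
def W2 (m : Fin n) (x : ℂ) (k : Fin n) (y : ℂ) : Fin n → ℂ :=
  fun j => (if j = m then x else 0) + (if j = k then y else 0)

lemma W2_apply (m : Fin n) (x : ℂ) (k : Fin n) (y : ℂ) (j : Fin n) :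
    W2 m x k y j = (if j = m then x else 0) + (if j = k then y else 0) := rfl

lemma sum_mul_W2 (t : Fin n → ℂ) (m : Fin n) (x : ℂ) (k : Fin n) (y : ℂ) :
    ∑ j, t j * W2 m x k y j = t m * x + t k * y := by
  simp [W2, mul_add, mul_ite, Finset.sum_add_distrib, Finset.sum_ite_eq']

lemma sum_mul_W2' (s r : Fin n → ℂ) (m : Fin n) (x : ℂ) (k : Fin n) (y : ℂ) :
    ∑ j, s j * (W2 m x k y j * r j) = s m * (x * r m) + s k * (y * r k) := by
  simp [W2, add_mul, mul_add, ite_mul, mul_ite, Finset.sum_add_distrib, Finset.sum_ite_eq']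

lemma sum_mul_W2_q {q : ℂ} (t : Fin n → ℂ) (p m : Fin n) (x : ℂ) (k : Fin n) (y : ℂ) :
    ∑ j, t j * W2 m x k y j * q ^ (sg p) j =
      t m * x * q ^ (sg p) m + t k * y * q ^ (sg p) k := by
  simp [W2, mul_add, add_mul, mul_ite, ite_mul, Finset.sum_add_distrib, Finset.sum_ite_eq']

lemma unInv {q A B : ℂ} (hq : q ≠ 0) (h : A = q⁻¹ * B) : q * A = B := by
  rw [h, ← mul_assoc, mul_inv_cancel₀ hq, one_mul]


/-! ### Classification of compatible triples -/

lemma classify {q : ℂ} (hq : q ≠ 0) (hq' : NotRootOfUnity q)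
    {a b c a' b' c' g hh l : Fin n → ℂ}
    (hr3 : SH n q a b c * SH n q a' b' c' =
      q⁻¹ • (SH n q a' b' c' * SH n q a b c) + SH n q g hh l)
    (hr1 : SH n q a b c * SH n q g hh l = q • (SH n q g hh l * SH n q a b c))
    (hr2 : SH n q a' b' c' * SH n q g hh l = q⁻¹ • (SH n q g hh l * SH n q a' b' c'))
    (hnz : SH n q g hh l ≠ 0) :
    ∃ k, a k ≠ 0 ∧ b' k ≠ 0 ∧ SH n q a b c = a k • X n q k ∧
      SH n q a' b' c' = b' k • Y n q k ∧ SH n q g hh l = (a k * b' k) • Z n q k := by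
  have hq1 : q ≠ 1 := fun hE => hq' 1 le_rfl (by simp [hE])
  have hq2 : q ^ 2 ≠ 1 := hq' 2 (by norm_num)
  have h1m : (1 : ℂ) - q ≠ 0 := sub_ne_zero.mpr (Ne.symm hq1)
  have hqm : q - 1 ≠ 0 := sub_ne_zero.mpr hq1
  have h2m : q ^ 2 - 1 ≠ 0 := sub_ne_zero.mpr hq2
  have hr3' : SH n q a b c * SH n q a' b' c' =
      q⁻¹ • (SH n q a' b' c' * SH n q a b c) + (1:ℂ) • SH n q g hh l := by
    rw [one_smul]; exact hr3
  have hr1' : SH n q a b c * SH n q g hh l =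
      q • (SH n q g hh l * SH n q a b c) + (0:ℂ) • SH n q (0 : Fin n → ℂ) 0 0 := by
    rw [zero_smul, add_zero]; exact hr1
  have hr2' : SH n q a' b' c' * SH n q g hh l =
      q⁻¹ • (SH n q g hh l * SH n q a' b' c') + (0:ℂ) • SH n q (0 : Fin n → ℂ) 0 0 := by
    rw [zero_smul, add_zero]; exact hr2
  have E3 := fun w => extract hq hr3' w
  have E1 := fun w => extract hq hr1' w
  have E2 := fun w => extract hq hr2' w
  -- `hh = 0`
  have hH : ∀ m, hh m = 0 := by
    intro m
    have e := (E3 (fun _ => 0)).2.1 m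
    simp only [mul_zero, zero_mul, Finset.sum_const_zero, one_mul, zero_add, add_zero,
      mul_comm] at e
    linear_combination -e
  -- `g = 0`
  have hG : ∀ m, g m = 0 := by
    intro m
    have e1 := (E3 (W2 m 1 m 0)).2.2 m
    have e2 := (E3 (W2 m (-1) m 0)).2.2 m
    simp only [sum_mul_W2, sum_mul_W2', sum_mul_W2_q] at e1 e2
    simp only [W2_apply, Finsupp.single_apply] at e1 e2
    norm_num at e1 e2
    linear_combination (e2 - e1) / 2
  -- the formula for `l`
  have hL : ∀ m, l m = a m * b' m - q⁻¹ * (b m * a' m) := by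
    intro m
    have e1 := (E3 (W2 m 1 m 0)).1
    have e2 := (E3 (W2 m (-1) m 0)).1
    simp only [sum_mul_W2, sum_mul_W2', sum_mul_W2_q] at e1 e2
    norm_num [W2_apply, Finsupp.single_apply] at e1 e2
    linear_combination (e2 - e1) / 2
  -- some `l k ≠ 0`
  obtain ⟨k, hk⟩ : ∃ k, l k ≠ 0 := by
    by_contra hcon
    push_neg at hcon
    apply hnz
    rw [show g = (0 : Fin n → ℂ) from funext hG, show hh = (0 : Fin n → ℂ) from funext hH,
      show l = (0 : Fin n → ℂ) from funext hcon]
    simp [SH]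
  -- `c = 0`
  have hprod : ∀ w : Fin n → ℂ, (∑ j, c j * w j) * (∑ j, l j * w j) = 0 := by
    intro w
    have e := (E1 w).1
    simp only [hG, hH, mul_zero, zero_mul, Finset.sum_const_zero, add_zero, zero_add] at e
    have e2 : (∑ j, c j * w j) * (∑ j, l j * w j) * (1 - q) = 0 := by linear_combination e
    rcases mul_eq_zero.mp e2 with hE | hE
    · exact hE
    · exact absurd hE h1m
  have hck : c k = 0 := by
    have e := hprod (W2 k 1 k 0)
    simp only [sum_mul_W2, mul_one, mul_zero, add_zero] at e
    rcases mul_eq_zero.mp e with hE | hE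
    · exact hE
    · exact absurd hE hk
  have hc : ∀ m, c m = 0 := by
    intro m
    have e1 := hprod (W2 m 1 k 1)
    have e2 := hprod (W2 m (-1) k 1)
    simp only [sum_mul_W2, mul_one, mul_neg, add_zero] at e1 e2
    have e3 : c m * (2 * l k) = 0 := by linear_combination e1 - e2 - 2 * l m * hck
    rcases mul_eq_zero.mp e3 with hE | hE
    · exact hE
    · exact absurd hE (mul_ne_zero two_ne_zero hk)
  -- `b = 0`
  have hb : ∀ m, b m = 0 := by
    intro m
    have e := (E1 (W2 k 1 k 0)).2.1 m
    simp only [sum_mul_W2, sum_mul_W2', sum_mul_W2_q] at e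
    simp only [hG, hH, hc] at e
    by_cases hmk : m = k
    · rw [hmk]
      simp [Finsupp.single_apply, hmk] at e
      have e2 : b k * (l k * (1 - q ^ 2)) = 0 := by linear_combination e
      rcases mul_eq_zero.mp e2 with hE | hE
      · exact hE
      · rcases mul_eq_zero.mp hE with hE2 | hE2
        · exact absurd hE2 hk
        · exact absurd (by linear_combination -hE2) h2m
    · simp [Finsupp.single_apply, hmk] at e
      have e2 : b m * (l k * (1 - q)) = 0 := by linear_combination e
      rcases mul_eq_zero.mp e2 with hE | hE
      · exact hE
      · rcases mul_eq_zero.mp hE with hE2 | hE2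
        · exact absurd hE2 hk
        · exact absurd hE2 h1m
  -- `a m = 0` off `k`
  have ha : ∀ m, m ≠ k → a m = 0 := by
    intro m hmk
    have e := (E1 (W2 m 1 k 1)).2.2 m
    simp only [sum_mul_W2, sum_mul_W2', sum_mul_W2_q] at e
    simp only [hG, hc, W2_apply, Finsupp.single_apply] at e
    simp [hmk, Ne.symm hmk] at e
    have e2 : a m * (l k * (1 - q)) = 0 := by linear_combination e
    rcases mul_eq_zero.mp e2 with hE | hE
    · exact hE
    · rcases mul_eq_zero.mp hE with hE2 | hE2
      · exact absurd hE2 hk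
      · exact absurd hE2 h1m
  -- `c' = 0`
  have hprod' : ∀ w : Fin n → ℂ, (∑ j, c' j * w j) * (∑ j, l j * w j) = 0 := by
    intro w
    have e := (E2 w).1
    simp only [hG, hH, mul_zero, zero_mul, Finset.sum_const_zero, add_zero, zero_add] at e
    have e' := unInv hq e
    have e2 : (∑ j, c' j * w j) * (∑ j, l j * w j) * (q - 1) = 0 := by linear_combination e'
    rcases mul_eq_zero.mp e2 with hE | hE
    · exact hE
    · exact absurd hE hqm
  have hck' : c' k = 0 := by
    have e := hprod' (W2 k 1 k 0)
    simp only [sum_mul_W2, mul_one, mul_zero, add_zero] at e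
    rcases mul_eq_zero.mp e with hE | hE
    · exact hE
    · exact absurd hE hk
  have hc' : ∀ m, c' m = 0 := by
    intro m
    have e1 := hprod' (W2 m 1 k 1)
    have e2 := hprod' (W2 m (-1) k 1)
    simp only [sum_mul_W2, mul_one, mul_neg, add_zero] at e1 e2
    have e3 : c' m * (2 * l k) = 0 := by linear_combination e1 - e2 - 2 * l m * hck'
    rcases mul_eq_zero.mp e3 with hE | hE
    · exact hE
    · exact absurd hE (mul_ne_zero two_ne_zero hk)
  -- `b' m = 0` off `k`
  have hb' : ∀ m, m ≠ k → b' m = 0 := by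
    intro m hmk
    have e := (E2 (W2 k 1 k 0)).2.1 m
    simp only [sum_mul_W2, sum_mul_W2', sum_mul_W2_q] at e
    simp only [hG, hH, hc', Finsupp.single_apply] at e
    simp [hmk] at e
    have e' := unInv hq e
    have e2 : b' m * (l k * (q - 1)) = 0 := by linear_combination e'
    rcases mul_eq_zero.mp e2 with hE | hE
    · exact hE
    · rcases mul_eq_zero.mp hE with hE2 | hE2
      · exact absurd hE2 hk
      · exact absurd hE2 hqm
  -- `a' = 0`
  have ha' : ∀ m, a' m = 0 := by
    intro m
    by_cases hmk : m = k
    · subst hmk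
      have e := (E2 (W2 m 1 m 0)).2.2 m
      simp only [sum_mul_W2, sum_mul_W2', sum_mul_W2_q] at e
      simp only [hG, hc', W2_apply, Finsupp.single_apply] at e
      norm_num at e
      have e' := unInv hq e
      have e2 : a' m * (l m * (q ^ 2 - 1)) = 0 := by linear_combination e'
      rcases mul_eq_zero.mp e2 with hE | hE
      · exact hE
      · rcases mul_eq_zero.mp hE with hE2 | hE2
        · exact absurd hE2 hk
        · exact absurd hE2 h2m
    · have e0 := (E2 (W2 m 1 k 0)).2.2 m
      have e1 := (E2 (W2 m 1 k 1)).2.2 m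
      simp only [sum_mul_W2, sum_mul_W2', sum_mul_W2_q] at e0 e1
      simp only [hG, hc', W2_apply, Finsupp.single_apply] at e0 e1
      simp [hmk, Ne.symm hmk] at e0 e1
      have e0' := unInv hq e0
      have e1' := unInv hq e1
      have e2 : a' m * (l k * (q - 1)) = 0 := by linear_combination e1' - e0'
      rcases mul_eq_zero.mp e2 with hE | hE
      · exact hE
      · rcases mul_eq_zero.mp hE with hE2 | hE2
        · exact absurd hE2 hk
        · exact absurd hE2 hqm
  -- assembly
  have hlk : l k = a k * b' k := by rw [hL k, hb k]; ring
  have hak : a k ≠ 0 := fun hE => hk (by rw [hlk, hE, zero_mul])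
  have hbk : b' k ≠ 0 := fun hE => hk (by rw [hlk, hE, mul_zero])
  have hlj : ∀ j, j ≠ k → l j = 0 := fun j hj => by
    rw [hL j, hb j, ha j hj]; ring
  refine ⟨k, hak, hbk, ?_, ?_, ?_⟩
  · rw [SH, Finset.sum_eq_single k]
    · rw [hb k, hc k]; simp
    · intro j _ hj
      rw [hb j, hc j, ha j hj]; simp
    · intro hE; exact absurd (Finset.mem_univ k) hE
  · rw [SH, Finset.sum_eq_single k]
    · rw [ha' k, hc' k]; simp
    · intro j _ hj
      rw [ha' j, hc' j, hb' j hj]; simp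
    · intro hE; exact absurd (Finset.mem_univ k) hE
  · rw [SH, Finset.sum_eq_single k]
    · rw [hG k, hH k, hlk]; simp
    · intro j _ hj
      rw [hG j, hH j, hlj j hj]; simp
    · intro hE; exact absurd (Finset.mem_univ k) hE

/-- For `q` nonzero and not a root of unity, any graded `ℂ`-algebra
automorphism `φ` of `𝔥_n(q)` is of the form `φ(x_i) = A_i x_{π(i)}`,
`φ(y_i) = B_i y_{π(i)}`, `φ(z_i) = A_i B_i z_{π(i)}` for some permutation `π` and nonzero
scalars `A_i, B_i`. -/
theorem graded_automorphism_form (n : ℕ) (hn : 1 ≤ n) (q : ℂ) (hq : q ≠ 0)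
    (hq' : NotRootOfUnity q) (φ : H n q ≃ₐ[ℂ] H n q)
    (hφ : ∀ v ∈ genSpan n q, φ v ∈ genSpan n q) :
    ∃ (π : Equiv.Perm (Fin n)) (A B : Fin n → ℂ),
      (∀ i, A i ≠ 0) ∧ (∀ i, B i ≠ 0) ∧
        ∀ i, φ (X n q i) = A i • X n q (π i) ∧
          φ (Y n q i) = B i • Y n q (π i) ∧
          φ (Z n q i) = (A i * B i) • Z n q (π i) := by
  classical
  have key : ∀ i : Fin n, ∃ k, ∃ A B : ℂ, A ≠ 0 ∧ B ≠ 0 ∧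
      φ (X n q i) = A • X n q k ∧ φ (Y n q i) = B • Y n q k ∧
      φ (Z n q i) = (A * B) • Z n q k := by
    intro i
    obtain ⟨a, b, c, hXr⟩ := mem_genSpan (hφ _ (X_mem_genSpan i))
    obtain ⟨a', b', c', hYr⟩ := mem_genSpan (hφ _ (Y_mem_genSpan i))
    obtain ⟨g, hh, l, hZr⟩ := mem_genSpan (hφ _ (Z_mem_genSpan i))
    have hr3 : SH n q a b c * SH n q a' b' c' =
        q⁻¹ • (SH n q a' b' c' * SH n q a b c) + SH n q g hh l := by
      rw [← hXr, ← hYr, ← hZr, ← map_mul, ← map_mul, ← map_smul, ← map_add]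
      exact congrArg φ (H_xy i)
    have hr1 : SH n q a b c * SH n q g hh l = q • (SH n q g hh l * SH n q a b c) := by
      rw [← hXr, ← hZr, ← map_mul, ← map_mul, ← map_smul]
      exact congrArg φ (H_xz i)
    have hr2 : SH n q a' b' c' * SH n q g hh l =
        q⁻¹ • (SH n q g hh l * SH n q a' b' c') := by
      rw [← hYr, ← hZr, ← map_mul, ← map_mul, ← map_smul]
      exact congrArg φ (H_yz i)
    have hnz : SH n q g hh l ≠ 0 := by
      rw [← hZr]
      intro hE
      exact Z_ne_zero hq i (φ.injective (by rw [hE, map_zero]))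
    obtain ⟨k, hak, hbk, h1, h2, h3⟩ := classify hq hq' hr3 hr1 hr2 hnz
    exact ⟨k, a k, b' k, hak, hbk, by rw [hXr, h1], by rw [hYr, h2], by rw [hZr, h3]⟩
  choose π0 A B hA hB hXe hYe hZe using key
  have hinj : Function.Injective π0 := by
    intro i i' hii
    by_contra hne
    have h1 : φ ((A i') • X n q i) = φ ((A i) • X n q i') := by
      rw [map_smul, map_smul, hXe i, hXe i', hii, smul_smul, smul_smul, mul_comm]
    have h2 := φ.injective h1
    exact hne (X_smul_eq_iff hq (hA i') h2)
  exact ⟨Equiv.ofBijective π0 (Finite.injective_iff_bijective.mp hinj), A, B, hA, hB,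
    fun i => ⟨hXe i, hYe i, hZe i⟩⟩

end QHeisenberg
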